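/- Let r ≥ 1 be an integer, q real with 0 < q < 1, x a real number, w_1, …, w_r positive real numbers, and a_1, …, a_r positive real numbers. Define E_{n,q}^{(r)}(x|w_1,…,w_r; a_1,…,a_r) = (2^r/(1-q)^n) Σ_{l=0}^n C(n,l)(-1)^l q^{lx} / ∏_{j=1}^r (1+q^{l w_j + a_j}). Then for every complex number t, the series Σ_{n=0}^∞ E_{n,q}^{(r)}(x|w_1,…,w_r; a_1,…,a_r) t^n/n! and the multiple series 2^r Σ_{(m_1,…,m_r)∈ℕ^r} (-1)^{m_1+⋯+m_r} q^{a_1 m_1 + ⋯ + a_r m_r} exp([x + w_1 m_1 + ⋯ + w_r m_r]_q · t) both converge absolutely and are equal. -/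

import Mathlib

open Finset

/-- The `q`-analogue `[y]_q = (1 - q^y)/(1 - q)` (real power). -/
noncomputable def qnum (q y : ℝ) : ℝ := (1 - q ^ y) / (1 - q)

/-- The Barnes-type multiple `q`-Euler polynomial
`E_{n,q}^{(r)}(x|w_1,…,w_r; a_1,…,a_r)
  = (2^r/(1-q)^n) Σ_{l=0}^n C(n,l)(-1)^l q^{lx} / ∏_{j=1}^r (1+q^{l w_j + a_j})`. -/
noncomputable def qEulerBarnes (n r : ℕ) (q x : ℝ) (w a : Fin r → ℝ) : ℝ :=
  (2 : ℝ) ^ r / (1 - q) ^ n *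
    ∑ l ∈ range (n + 1),
      (n.choose l : ℝ) * (-1) ^ l * q ^ ((l : ℝ) * x) / ∏ j, (1 + q ^ ((l : ℝ) * w j + a j))

set_option maxHeartbeats 1000000 in
lemma hasSum_pi_geom : ∀ (r : ℕ) (b : Fin r → ℝ), (∀ j, |b j| < 1) →
    HasSum (fun m : Fin r → ℕ => ∏ j, b j ^ m j) (∏ j, (1 - b j)⁻¹) := by
  intro r
  induction r with
  | zero =>
    intro b hb
    simp only [Finset.univ_eq_empty, Finset.prod_empty]
    have h := hasSum_single (f := fun _ : Fin 0 → ℕ => (1 : ℝ)) default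
      (fun b' hb' => absurd (Subsingleton.elim b' default) hb')
    simpa using h
  | succ n ih =>
    intro b hb
    have hgeom : HasSum (fun k : ℕ => b 0 ^ k) (1 - b 0)⁻¹ :=
      hasSum_geometric_of_abs_lt_one (hb 0)
    have htail : HasSum (fun m : Fin n → ℕ => ∏ j, b j.succ ^ m j)
        (∏ j : Fin n, (1 - b j.succ)⁻¹) := ih _ fun j => hb j.succ
    have h1 : Summable (fun k : ℕ => |b 0| ^ k) :=
      summable_geometric_of_lt_one (abs_nonneg _) (hb 0)
    have h2 : Summable (fun m : Fin n → ℕ => ∏ j, |b j.succ| ^ m j) :=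
      (ih (fun j => |b j.succ|) (fun j => by rw [abs_abs]; exact hb j.succ)).summable
    have habs : Summable (fun p : ℕ × (Fin n → ℕ) =>
        |b 0| ^ p.1 * ∏ j, |b j.succ| ^ p.2 j) :=
      Summable.mul_of_nonneg (f := fun k : ℕ => |b 0| ^ k)
        (g := fun m : Fin n → ℕ => ∏ j, |b j.succ| ^ m j) h1 h2
        (fun k => pow_nonneg (abs_nonneg _) _)
        (fun m => Finset.prod_nonneg fun j _ => pow_nonneg (abs_nonneg _) _)
    have hs : Summable (fun p : ℕ × (Fin n → ℕ) => b 0 ^ p.1 * ∏ j, b j.succ ^ p.2 j) := by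
      apply Summable.of_norm
      convert habs using 2 with p
      simp [Real.norm_eq_abs, abs_mul, Finset.abs_prod, abs_pow]
    have hmul := hgeom.mul htail hs
    rw [Fin.prod_univ_succ]
    apply (Fin.consEquiv (fun _ : Fin (n + 1) => ℕ)).hasSum_iff.mp
    have heq : (fun m : Fin (n + 1) → ℕ => ∏ j, b j ^ m j) ∘ (Fin.consEquiv fun _ => ℕ)
        = fun p : ℕ × (Fin n → ℕ) => b 0 ^ p.1 * ∏ j, b j.succ ^ p.2 j := by
      funext p
      simp [Fin.consEquiv, Fin.prod_univ_succ]
    rw [heq]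
    exact hmul

lemma key_hasSum (r n : ℕ) (q x : ℝ) (hq0 : 0 < q) (hq1 : q < 1)
    (w a : Fin r → ℝ) (hw : ∀ i, 0 < w i) (ha : ∀ i, 0 < a i) :
    HasSum (fun m : Fin r → ℕ =>
      (-1 : ℝ) ^ (∑ i, m i) * q ^ (∑ i, a i * (m i : ℝ)) *
        (qnum q (x + ∑ i, w i * (m i : ℝ))) ^ n)
      (qEulerBarnes n r q x w a / 2 ^ r) := by
  have hq1' : (0 : ℝ) < 1 - q := by linarith
  have hnp : ∀ (e : ℝ) (k : ℕ), (q ^ e) ^ k = q ^ (e * (k : ℝ)) := fun e k => by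
    rw [← Real.rpow_natCast (q ^ e) k, ← Real.rpow_mul hq0.le]
  set c : ℕ → ℝ := fun l => (n.choose l : ℝ) * (-1) ^ l * q ^ ((l : ℝ) * x) / (1 - q) ^ n
    with hc
  set b : ℕ → Fin r → ℝ := fun l j => -(q ^ ((l : ℝ) * w j + a j)) with hbdef
  have hbpos : ∀ (l : ℕ) j, (0 : ℝ) < q ^ ((l : ℝ) * w j + a j) := fun l j =>
    Real.rpow_pos_of_pos hq0 _
  have hblt : ∀ (l : ℕ) j, q ^ ((l : ℝ) * w j + a j) < 1 := fun l j =>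
    Real.rpow_lt_one hq0.le hq1 (by
      have h1 := hw j; have h2 := ha j
      have : (0:ℝ) ≤ (l : ℝ) := Nat.cast_nonneg l
      nlinarith)
  have hL : ∀ l : ℕ, HasSum (fun m : Fin r → ℕ => c l * ∏ j, b l j ^ m j)
      (c l * ∏ j, (1 + q ^ ((l : ℝ) * w j + a j))⁻¹) := by
    intro l
    have h := (hasSum_pi_geom r (b l) (fun j => by
      rw [hbdef]; simp only [abs_neg, abs_of_pos (hbpos l j)]; exact hblt l j)).mul_left (c l)
    convert h using 3 with j
    · rfl
    · rw [hbdef]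
      simp [sub_neg_eq_add]
  have hsum := hasSum_sum (f := fun l (m : Fin r → ℕ) => c l * ∏ j, b l j ^ m j)
    (s := range (n + 1)) (fun l _ => hL l)
  -- identify the value
  have hval : ∑ l ∈ range (n + 1), c l * ∏ j, (1 + q ^ ((l : ℝ) * w j + a j))⁻¹
      = qEulerBarnes n r q x w a / 2 ^ r := by
    rw [qEulerBarnes]
    rw [eq_div_iff (by positivity : ((2:ℝ)) ^ r ≠ 0), Finset.sum_mul, Finset.mul_sum]
    refine Finset.sum_congr rfl fun l _ => ?_
    have hP : (0:ℝ) < ∏ j, (1 + q ^ ((l:ℝ) * w j + a j)) :=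
      Finset.prod_pos fun j _ => by have := hbpos l j; linarith
    rw [hc, Finset.prod_inv_distrib]
    field_simp
  rw [← hval]
  refine hsum.congr_fun fun m => ?_
  -- pointwise identity
  set W : ℝ := ∑ i, w i * (m i : ℝ) with hW
  set A : ℝ := ∑ i, a i * (m i : ℝ) with hA
  set S : ℕ := ∑ i, m i with hS
  have hterm : ∀ l : ℕ, c l * ∏ j, b l j ^ m j
      = ((-1) ^ S * q ^ A / (1 - q) ^ n) * ((n.choose l : ℝ) * (-(q ^ (x + W))) ^ l) := by
    intro l
    have hprod : ∏ j, b l j ^ m j = (-1) ^ S * q ^ ((l : ℝ) * W + A) := by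
      simp only [hbdef]
      have hng : ∀ j ∈ Finset.univ, (-(q ^ ((l:ℝ) * w j + a j))) ^ m j
          = (-1 : ℝ) ^ m j * (q ^ ((l:ℝ) * w j + a j)) ^ m j := fun j _ => by
        rw [neg_pow]
      rw [Finset.prod_congr rfl hng]
      rw [Finset.prod_mul_distrib, Finset.prod_pow_eq_pow_sum, ← hS]
      congr 1
      have : ∀ j ∈ Finset.univ, (q ^ ((l:ℝ) * w j + a j)) ^ m j
          = q ^ (((l:ℝ) * w j + a j) * (m j : ℝ)) := fun j _ => hnp _ _
      rw [Finset.prod_congr rfl this, ← Real.rpow_sum_of_pos hq0]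
      congr 1
      rw [hW, hA, Finset.mul_sum, ← Finset.sum_add_distrib]
      exact Finset.sum_congr rfl fun j _ => by ring
    rw [hprod, hc]
    have hxw : q ^ ((l:ℝ) * x) * q ^ ((l : ℝ) * W + A)
        = q ^ A * (q ^ (x + W)) ^ l := by
      rw [hnp (x + W) l, ← Real.rpow_add hq0, ← Real.rpow_add hq0]
      congr 1
      ring
    have hneg : (-(q ^ (x + W))) ^ l = (-1 : ℝ) ^ l * (q ^ (x + W)) ^ l := by
      rw [neg_pow]
    rw [hneg]
    have hn0 : ((1:ℝ) - q) ^ n ≠ 0 := by positivity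
    field_simp
    linear_combination (n.choose l : ℝ) * hxw
  rw [Finset.sum_congr rfl fun l _ => hterm l, ← Finset.mul_sum]
  have hbin : ∑ l ∈ range (n + 1), (n.choose l : ℝ) * (-(q ^ (x + W))) ^ l
      = (1 - q ^ (x + W)) ^ n := by
    have h := add_pow (-(q ^ (x + W))) (1 : ℝ) n
    rw [show -(q ^ (x + W)) + 1 = 1 - q ^ (x + W) by ring] at h
    rw [h]
    exact Finset.sum_congr rfl fun l _ => by rw [one_pow]; ring
  rw [hbin, qnum, div_pow]
  ring

set_option maxHeartbeats 1000000 in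
theorem stmt_9 (r : ℕ) (hr : 1 ≤ r) (q : ℝ) (hq0 : 0 < q) (hq1 : q < 1) (x : ℝ)
    (w a : Fin r → ℝ) (hw : ∀ i, 0 < w i) (ha : ∀ i, 0 < a i) (t : ℂ) :
    Summable (fun n : ℕ => ‖((qEulerBarnes n r q x w a : ℝ) : ℂ) * t ^ n / (n.factorial : ℂ)‖) ∧
    Summable (fun m : Fin r → ℕ =>
      ‖(-1 : ℂ) ^ (∑ i, m i) * ((q ^ (∑ i, a i * m i) : ℝ) : ℂ) *
        Complex.exp (((qnum q (x + ∑ i, w i * m i) : ℝ) : ℂ) * t)‖) ∧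
    ∑' n : ℕ, ((qEulerBarnes n r q x w a : ℝ) : ℂ) * t ^ n / (n.factorial : ℂ) =
      (2 : ℂ) ^ r * ∑' m : Fin r → ℕ,
        (-1 : ℂ) ^ (∑ i, m i) * ((q ^ (∑ i, a i * m i) : ℝ) : ℂ) *
          Complex.exp (((qnum q (x + ∑ i, w i * m i) : ℝ) : ℂ) * t) := by
  have hq1' : (0 : ℝ) < 1 - q := by linarith
  set g : (Fin r → ℕ) → ℝ := fun m => (-1 : ℝ) ^ (∑ i, m i) * q ^ (∑ i, a i * (m i : ℝ))
    with hgdef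
  set G : (Fin r → ℕ) → ℝ := fun m => q ^ (∑ i, a i * (m i : ℝ)) with hGdef
  set y : (Fin r → ℕ) → ℝ := fun m => qnum q (x + ∑ i, w i * (m i : ℝ)) with hydef
  set E : ℕ → ℝ := fun n => qEulerBarnes n r q x w a with hEdef
  have key : ∀ n, HasSum (fun m => g m * y m ^ n) (E n / 2 ^ r) := fun n =>
    key_hasSum r n q x hq0 hq1 w a hw ha
  set M : ℝ := max |qnum q x| (1 - q)⁻¹ with hMdef
  have hM0 : 0 ≤ M := le_trans (by positivity) (le_max_right _ _)
  -- |y m| ≤ M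
  have hyM : ∀ m, |y m| ≤ M := by
    intro m
    have hWnn : (0:ℝ) ≤ ∑ i, w i * (m i : ℝ) :=
      Finset.sum_nonneg fun i _ => mul_nonneg (hw i).le (Nat.cast_nonneg _)
    have hqle : q ^ (x + ∑ i, w i * (m i : ℝ)) ≤ q ^ x :=
      Real.rpow_le_rpow_of_exponent_ge hq0 hq1.le (by linarith)
    have hqpos : (0:ℝ) < q ^ (x + ∑ i, w i * (m i : ℝ)) := Real.rpow_pos_of_pos hq0 _
    have h1 : qnum q x ≤ y m := by
      simp only [hydef, qnum]
      gcongr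
    have h2 : y m ≤ (1 - q)⁻¹ := by
      simp only [hydef, qnum]
      rw [div_le_iff₀ hq1', inv_mul_cancel₀ hq1'.ne']
      linarith
    rw [abs_le]
    refine ⟨?_, le_trans h2 (le_max_right _ _)⟩
    have h3 := neg_abs_le (qnum q x)
    have h4 := le_max_left |qnum q x| (1 - q)⁻¹
    linarith
  -- G has sum C
  have hG : HasSum G (∏ j, (1 - q ^ a j)⁻¹) := by
    have hb : ∀ j : Fin r, |q ^ a j| < 1 := fun j => by
      rw [abs_of_pos (Real.rpow_pos_of_pos hq0 _)]
      exact Real.rpow_lt_one hq0.le hq1 (ha j)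
    refine (hasSum_pi_geom r (fun j => q ^ a j) hb).congr_fun fun m => ?_
    rw [hGdef]
    simp only
    rw [Real.rpow_sum_of_pos hq0]
    refine Finset.prod_congr rfl fun j _ => ?_
    rw [← Real.rpow_natCast (q ^ a j) (m j), ← Real.rpow_mul hq0.le]
  set C : ℝ := ∏ j, (1 - q ^ a j)⁻¹ with hCdef
  have hC0 : 0 ≤ C := Finset.prod_nonneg fun j _ => by
    have := Real.rpow_lt_one hq0.le hq1 (ha j)
    exact inv_nonneg.mpr (by linarith)
  have hGnn : ∀ m, 0 ≤ G m := fun m => (Real.rpow_pos_of_pos hq0 _).le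
  have habsg : ∀ m, |g m| = G m := fun m => by
    rw [hgdef, hGdef]
    simp only [abs_mul, abs_pow, abs_neg, abs_one, one_pow, one_mul]
    exact abs_of_pos (Real.rpow_pos_of_pos hq0 _)
  -- bound on tsum
  have htsum_bound : ∀ n : ℕ, |∑' m, g m * y m ^ n| ≤ C * M ^ n := by
    intro n
    have hle : ∀ m, |g m * y m ^ n| ≤ G m * M ^ n := fun m => by
      rw [abs_mul, habsg, abs_pow]
      exact mul_le_mul_of_nonneg_left (pow_le_pow_left₀ (abs_nonneg _) (hyM m) n) (hGnn m)
    have hsum2 : Summable (fun m => G m * M ^ n) := hG.summable.mul_right _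
    have habs_sum : Summable (fun m => |g m * y m ^ n|) :=
      Summable.of_nonneg_of_le (fun m => abs_nonneg _) hle hsum2
    have habs_sum' : Summable (fun m => ‖g m * y m ^ n‖) := habs_sum
    calc |∑' m, g m * y m ^ n| ≤ ∑' m, |g m * y m ^ n| :=
          norm_tsum_le_tsum_norm habs_sum'
      _ ≤ ∑' m, G m * M ^ n := Summable.tsum_le_tsum hle habs_sum hsum2
      _ = C * M ^ n := by rw [tsum_mul_right, hG.tsum_eq]
  have hEn : ∀ n : ℕ, |E n| ≤ 2 ^ r * (C * M ^ n) := by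
    intro n
    have h := (key n).tsum_eq
    have : E n = 2 ^ r * ∑' m, g m * y m ^ n := by
      rw [h]; field_simp
    rw [this, abs_mul, abs_of_pos (by positivity : (0:ℝ) < (2:ℝ) ^ r)]
    exact mul_le_mul_of_nonneg_left (htsum_bound n) (by positivity)
  -- Claim 1
  have claim1 : Summable (fun n : ℕ => ‖((E n : ℝ) : ℂ) * t ^ n / (n.factorial : ℂ)‖) := by
    refine Summable.of_nonneg_of_le (fun n => norm_nonneg _) (fun n => ?_)
      ((Real.summable_pow_div_factorial (M * ‖t‖)).mul_left (2 ^ r * C))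
    have hnorm : ‖((E n : ℝ) : ℂ) * t ^ n / (n.factorial : ℂ)‖
        = |E n| * ‖t‖ ^ n / (n.factorial : ℝ) := by
      simp [norm_div, norm_mul, norm_pow, Complex.norm_real, Real.norm_eq_abs,
        Complex.norm_natCast]
    rw [hnorm]
    have hrh : (2:ℝ) ^ r * C * ((M * ‖t‖) ^ n / (n.factorial : ℝ))
        = 2 ^ r * (C * M ^ n) * ‖t‖ ^ n / (n.factorial : ℝ) := by
      rw [mul_pow]; ring
    rw [hrh]
    gcongr
    exact hEn n
  -- Claim 2
  have hexp_bound : ∀ m, ‖Complex.exp (((y m : ℝ) : ℂ) * t)‖ ≤ Real.exp (M * ‖t‖) := by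
    intro m
    rw [Complex.norm_exp]
    apply Real.exp_le_exp.mpr
    calc (((y m : ℝ) : ℂ) * t).re ≤ ‖((y m : ℝ) : ℂ) * t‖ := Complex.re_le_norm _
      _ = |y m| * ‖t‖ := by rw [norm_mul, Complex.norm_real, Real.norm_eq_abs]
      _ ≤ M * ‖t‖ := mul_le_mul_of_nonneg_right (hyM m) (norm_nonneg _)
  have claim2 : Summable (fun m : Fin r → ℕ =>
      ‖(-1 : ℂ) ^ (∑ i, m i) * ((q ^ (∑ i, a i * (m i : ℝ)) : ℝ) : ℂ) *
        Complex.exp (((qnum q (x + ∑ i, w i * (m i : ℝ)) : ℝ) : ℂ) * t)‖) := by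
    refine Summable.of_nonneg_of_le (fun m => norm_nonneg _) (fun m => ?_)
      (hG.summable.mul_right (Real.exp (M * ‖t‖)))
    rw [norm_mul, norm_mul, norm_pow, norm_neg, norm_one, one_pow, one_mul,
      Complex.norm_real, Real.norm_eq_abs, abs_of_pos (Real.rpow_pos_of_pos hq0 _)]
    exact mul_le_mul_of_nonneg_left (hexp_bound m) (hGnn m)
  refine ⟨claim1, claim2, ?_⟩
  -- main equality
  set F : ℕ × (Fin r → ℕ) → ℂ := fun p =>
    ((g p.2 : ℝ) : ℂ) * ((y p.2 : ℝ) : ℂ) ^ p.1 * t ^ p.1 / (p.1.factorial : ℂ) with hFdef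
  have hF : Summable F := by
    apply Summable.of_norm
    refine Summable.of_nonneg_of_le (fun p => norm_nonneg _) (fun p => ?_)
      (Summable.mul_of_nonneg (f := fun n : ℕ => (M * ‖t‖) ^ n / (n.factorial : ℝ))
        (g := G) (Real.summable_pow_div_factorial (M * ‖t‖)) hG.summable
        (fun n => by positivity) hGnn)
    rw [hFdef]
    simp only [norm_div, norm_mul, norm_pow, Complex.norm_real, Real.norm_eq_abs,
      Complex.norm_natCast]
    rw [habsg]
    have hrh : (M * ‖t‖) ^ p.1 / (p.1.factorial : ℝ) * G p.2
        = G p.2 * M ^ p.1 * ‖t‖ ^ p.1 / (p.1.factorial : ℝ) := by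
      rw [mul_pow]; ring
    rw [hrh]
    gcongr
    exact hyM p.2
  have h2r : ((2 : ℂ) ^ r) ≠ 0 := pow_ne_zero _ two_ne_zero
  have step1 : ∀ n : ℕ, ((E n : ℝ) : ℂ) * t ^ n / (n.factorial : ℂ)
      = ∑' m : Fin r → ℕ, (2 : ℂ) ^ r * F (n, m) := by
    intro n
    have hc : HasSum (fun m : Fin r → ℕ => ((g m * y m ^ n : ℝ) : ℂ))
        (((E n / 2 ^ r : ℝ) : ℂ)) := Complex.hasSum_ofReal.mpr (key n)
    have hc2 := (hc.mul_right (t ^ n / (n.factorial : ℂ))).mul_left ((2 : ℂ) ^ r)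
    have hc3 : HasSum (fun m : Fin r → ℕ => (2 : ℂ) ^ r * F (n, m))
        ((2 : ℂ) ^ r * (((E n / 2 ^ r : ℝ) : ℂ) * (t ^ n / (n.factorial : ℂ)))) :=
      hc2.congr_fun fun m => by rw [hFdef]; push_cast; ring
    rw [hc3.tsum_eq]
    push_cast
    field_simp
  have step2 : ∀ m : Fin r → ℕ, ∑' n : ℕ, F (n, m)
      = ((g m : ℝ) : ℂ) * Complex.exp (((y m : ℝ) : ℂ) * t) := by
    intro m
    have hexp : Complex.exp (((y m : ℝ) : ℂ) * t)
        = ∑' n : ℕ, (((y m : ℝ) : ℂ) * t) ^ n / (n.factorial : ℂ) := by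
      rw [Complex.exp_eq_exp_ℂ, NormedSpace.exp_eq_tsum_div]
    calc ∑' n : ℕ, F (n, m)
        = ∑' n : ℕ, ((g m : ℝ) : ℂ) * ((((y m : ℝ) : ℂ) * t) ^ n / (n.factorial : ℂ)) :=
          tsum_congr fun n => by rw [hFdef]; ring
      _ = ((g m : ℝ) : ℂ) * ∑' n : ℕ, (((y m : ℝ) : ℂ) * t) ^ n / (n.factorial : ℂ) :=
          tsum_mul_left
      _ = ((g m : ℝ) : ℂ) * Complex.exp (((y m : ℝ) : ℂ) * t) := by rw [← hexp]
  calc ∑' n : ℕ, ((qEulerBarnes n r q x w a : ℝ) : ℂ) * t ^ n / (n.factorial : ℂ)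
      = ∑' n : ℕ, ∑' m : Fin r → ℕ, (2 : ℂ) ^ r * F (n, m) := tsum_congr step1
    _ = ∑' n : ℕ, (2 : ℂ) ^ r * ∑' m : Fin r → ℕ, F (n, m) :=
        tsum_congr fun n => tsum_mul_left
    _ = (2 : ℂ) ^ r * ∑' n : ℕ, ∑' m : Fin r → ℕ, F (n, m) := tsum_mul_left
    _ = (2 : ℂ) ^ r * ∑' m : Fin r → ℕ, ∑' n : ℕ, F (n, m) := by
        have hF' : Summable (Function.uncurry fun (n : ℕ) (m : Fin r → ℕ) => F (n, m)) := hF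
        rw [Summable.tsum_comm hF']
    _ = (2 : ℂ) ^ r * ∑' m : Fin r → ℕ,
          (-1 : ℂ) ^ (∑ i, m i) * ((q ^ (∑ i, a i * (m i : ℝ)) : ℝ) : ℂ) *
            Complex.exp (((qnum q (x + ∑ i, w i * (m i : ℝ)) : ℝ) : ℂ) * t) := by
        congr 1
        refine tsum_congr fun m => ?_
        rw [step2 m, hgdef, hydef]
        push_cast
        ring
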